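/- arXiv:2210.03700 — 2 statements merged into one kernel-verified Lean document; each statement's English description precedes it below -/
import Mathlib

section
/- Let I define a connected graph on {1,...,n} and let D_{ij,1}, D_{ij,2} > 0 for (i,j) ∈ I. Define h_{ij} = D_{ij,2}/D_{ij,1}. Then the data is consistent (h multiplies to 1 along every cycle of the graph) if and only if there exists m ∈ ℝ^n with m_1 = 0 such that D_{ij,2}/D_{ij,1} = F(m_i − m_j)/F(m_j − m_i) for all (i,j) ∈ I, where F is the logistic c.d.f. -/
noncomputable def F (x : ℝ) : ℝ := 1 / (1 + Real.exp (-x))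

lemma F_ratio (a : ℝ) : F a / F (-a) = Real.exp a := by
  have h1 : (0:ℝ) < 1 + Real.exp (-a) := by positivity
  have h2 : (0:ℝ) < 1 + Real.exp a := by positivity
  simp only [F, neg_neg]
  field_simp
  rw [add_mul, ← Real.exp_add]
  simp [add_comm]

theorem consistency_iff_exists_parameters (n : ℕ)
    (G : SimpleGraph (Fin (n + 1))) (hconn : G.Connected)
    (D1 D2 : Fin (n + 1) → Fin (n + 1) → ℝ)
    (hD1 : ∀ i j, G.Adj i j → 0 < D1 i j)
    (hD2 : ∀ i j, G.Adj i j → 0 < D2 i j)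
    (hrec : ∀ i j, G.Adj i j → D1 j i = D2 i j ∧ D2 j i = D1 i j) :
    (∀ (i : Fin (n + 1)) (p : G.Walk i i),
        (p.darts.map (fun d => D2 d.toProd.1 d.toProd.2 / D1 d.toProd.1 d.toProd.2)).prod = 1)
    ↔ ∃ m : Fin (n + 1) → ℝ, m 0 = 0 ∧
        ∀ i j, G.Adj i j →
          D2 i j / D1 i j = F (m i - m j) / F (m j - m i) := by
  set f : G.Dart → ℝ := fun d => D2 d.toProd.1 d.toProd.2 / D1 d.toProd.1 d.toProd.2 with hf
  set W : ∀ (a b : Fin (n+1)), G.Walk a b → ℝ := fun a b p => (p.darts.map f).prod with hW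
  have fpos : ∀ d : G.Dart, 0 < f d := fun d =>
    div_pos (hD2 _ _ d.adj) (hD1 _ _ d.adj)
  have finv : ∀ d : G.Dart, f d.symm = (f d)⁻¹ := by
    intro d
    obtain ⟨h1, h2⟩ := hrec _ _ d.adj
    simp only [hf, SimpleGraph.Dart.symm_toProd, Prod.fst_swap, Prod.snd_swap, h1, h2]
    rw [inv_div]
  have Wpos : ∀ {a b : Fin (n+1)} (p : G.Walk a b), 0 < W _ _ p := by
    intro a b p
    apply List.prod_pos
    intro x hx
    obtain ⟨d, _, rfl⟩ := List.mem_map.mp hx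
    exact fpos d
  have Wrev : ∀ {a b : Fin (n+1)} (p : G.Walk a b), W _ _ p.reverse = (W _ _ p)⁻¹ := by
    intro a b p
    simp only [hW, SimpleGraph.Walk.darts_reverse, List.map_reverse, List.prod_reverse,
      List.map_map]
    induction p.darts with
    | nil => simp
    | cons d l ih =>
      simp only [List.map_cons, List.prod_cons, Function.comp_apply, finv d, ih, mul_inv]
  have Wconcat : ∀ {a b c : Fin (n+1)} (p : G.Walk a b) (h : G.Adj b c),
      W _ _ (p.concat h) = W _ _ p * f ⟨(b, c), h⟩ := by
    intro a b c p h
    simp [hW, SimpleGraph.Walk.darts_concat, List.concat_eq_append]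
  have Wappend : ∀ {a b c : Fin (n+1)} (p : G.Walk a b) (q : G.Walk b c),
      W _ _ (p.append q) = W _ _ p * W _ _ q := by
    intro a b c p q
    simp [hW, SimpleGraph.Walk.darts_append]
  constructor
  · intro hyp
    have hreach : ∀ i : Fin (n+1), Nonempty (G.Walk 0 i) := fun i =>
      hconn.preconnected 0 i
    set P : ∀ i : Fin (n+1), G.Walk 0 i := fun i => (hreach i).some with hP
    refine ⟨fun i => - Real.log (W _ _ (P i)), ?_, ?_⟩
    · have := hyp 0 (P 0)
      simp only [hW] at this ⊢
      rw [this, Real.log_one, neg_zero]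
    · intro i j hadj
      have key : W _ _ (P i) * f ⟨(i, j), hadj⟩ = W _ _ (P j) := by
        have hc : W 0 0 (((P i).concat hadj).append (P j).reverse) = 1 :=
          hyp 0 _
        rw [Wappend, Wconcat, Wrev] at hc
        have := (Wpos (P j)).ne'
        field_simp at hc
        linarith [hc]
      have hflog : f ⟨(i, j), hadj⟩ =
          Real.exp ((- Real.log (W 0 i (P i))) - (- Real.log (W 0 j (P j)))) := by
        rw [show (- Real.log (W 0 i (P i))) - (- Real.log (W 0 j (P j)))
            = Real.log (W 0 j (P j)) - Real.log (W 0 i (P i)) by ring,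
          Real.exp_sub, Real.exp_log (Wpos _), Real.exp_log (Wpos _), ← key,
          mul_comm, mul_div_assoc, div_self (Wpos (P i)).ne', mul_one]
      have : D2 i j / D1 i j = f ⟨(i, j), hadj⟩ := rfl
      rw [this, hflog, show (-Real.log (W _ _ (P j)) - -Real.log (W _ _ (P i))) =
        -((-Real.log (W _ _ (P i))) - (-Real.log (W _ _ (P j)))) by ring, F_ratio]
  · rintro ⟨m, _, hm⟩
    have hexp : ∀ i j (h : G.Adj i j), D2 i j / D1 i j = Real.exp (m i - m j) := by
      intro i j h
      rw [hm i j h, show m j - m i = -(m i - m j) by ring, F_ratio]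
    have key : ∀ {a b : Fin (n+1)} (p : G.Walk a b), W _ _ p = Real.exp (m a - m b) := by
      intro a b p
      induction p with
      | nil => simp [hW]
      | cons h q ih =>
        simp only [hW, SimpleGraph.Walk.darts_cons, List.map_cons, List.prod_cons]
        have ih' : (List.map f q.darts).prod = Real.exp (m _ - m _) := ih
        rw [show f _ = Real.exp (m _ - m _) from hexp _ _ h, ih', ← Real.exp_add]
        ring_nf
    intro i p
    exact (key p).trans (by simp)
end

section
/- Let m⁰ ∈ ℝ^n with m⁰_1 = 0, let I be a set of pairs whose graph is connected, and define data D_{ij,1} = F(m⁰_j − m⁰_i), D_{ij,2} = F(m⁰_i − m⁰_j) for (i,j) ∈ I, where F is the logistic c.d.f. Then the log-likelihood L(m) = Σ_{(i,j)∈I} [D_{ij,1}·ln F(m_j − m_i) + D_{ij,2}·ln F(m_i − m_j)], restricted to vectors m with m_1 = 0, attains its maximum uniquely at m = m⁰. -/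
lemma F_pos (x : ℝ) : 0 < F x := by
  unfold F
  positivity

lemma F_lt_one (x : ℝ) : F x < 1 := by
  unfold F
  rw [div_lt_one (by positivity)]
  linarith [Real.exp_pos (-x)]

lemma F_neg (x : ℝ) : F (-x) = 1 - F x := by
  unfold F
  have h : Real.exp x * Real.exp (-x) = 1 := by
    rw [← Real.exp_add]; simp
  have h1 : (0:ℝ) < 1 + Real.exp (-x) := by positivity
  have h2 : (0:ℝ) < 1 + Real.exp (-(-x)) := by positivity
  rw [neg_neg] at h2 ⊢
  field_simp
  nlinarith [h]

lemma F_inj {x y : ℝ} (h : F x = F y) : x = y := by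
  unfold F at h
  have h1 : (0:ℝ) < 1 + Real.exp (-x) := by positivity
  have h2 : (0:ℝ) < 1 + Real.exp (-y) := by positivity
  field_simp at h
  have hx := Real.exp_injective (by linarith : Real.exp (-x) = Real.exp (-y))
  linarith

lemma gibbs {p q : ℝ} (hp0 : 0 < p) (hp1 : p < 1) (hq0 : 0 < q) (hq1 : q < 1) :
    q * Real.log p + (1 - q) * Real.log (1 - p) ≤
      q * Real.log q + (1 - q) * Real.log (1 - q) ∧
    (q * Real.log p + (1 - q) * Real.log (1 - p) =
      q * Real.log q + (1 - q) * Real.log (1 - q) → p = q) := by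
  have hq0' := hq0.ne'
  have h1q : (0:ℝ) < 1 - q := by linarith
  have h1p : (0:ℝ) < 1 - p := by linarith
  have key : ∀ r : ℝ, p ≠ q →
      q * Real.log p + (1 - q) * Real.log (1 - p) <
        q * Real.log q + (1 - q) * Real.log (1 - q) := by
    intro _ hne
    rcases lt_or_gt_of_ne hne with hlt | hgt
    · have ha : Real.log (p / q) < p / q - 1 :=
        Real.log_lt_sub_one_of_pos (by positivity) (by
          intro h; apply hne; field_simp at h; linarith)
      have hb : Real.log ((1 - p) / (1 - q)) ≤ (1 - p) / (1 - q) - 1 :=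
        Real.log_le_sub_one_of_pos (by positivity)
      rw [Real.log_div hp0.ne' hq0'] at ha
      rw [Real.log_div h1p.ne' h1q.ne'] at hb
      have ha' : q * (Real.log p - Real.log q) < p - q := by
        have := mul_lt_mul_of_pos_left ha hq0
        have heq : q * (p / q - 1) = p - q := by field_simp
        linarith [heq ▸ this]
      have hb' : (1 - q) * (Real.log (1 - p) - Real.log (1 - q)) ≤ q - p := by
        have := mul_le_mul_of_nonneg_left hb h1q.le
        have heq : (1 - q) * ((1 - p) / (1 - q) - 1) = q - p := by field_simp; ring
        linarith [heq ▸ this]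
      nlinarith
    · have ha : Real.log (p / q) ≤ p / q - 1 :=
        Real.log_le_sub_one_of_pos (by positivity)
      have hb : Real.log ((1 - p) / (1 - q)) < (1 - p) / (1 - q) - 1 :=
        Real.log_lt_sub_one_of_pos (by positivity) (by
          intro h; apply hne; field_simp at h; linarith)
      rw [Real.log_div hp0.ne' hq0'] at ha
      rw [Real.log_div h1p.ne' h1q.ne'] at hb
      have ha' : q * (Real.log p - Real.log q) ≤ p - q := by
        have := mul_le_mul_of_nonneg_left ha hq0.le
        have heq : q * (p / q - 1) = p - q := by field_simp
        linarith [heq ▸ this]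
      have hb' : (1 - q) * (Real.log (1 - p) - Real.log (1 - q)) < q - p := by
        have := mul_lt_mul_of_pos_left hb h1q
        have heq : (1 - q) * ((1 - p) / (1 - q) - 1) = q - p := by field_simp; ring
        linarith [heq ▸ this]
      nlinarith
  constructor
  · by_cases hne : p = q
    · subst hne; exact le_rfl
    · exact le_of_lt (key 0 hne)
  · intro heq
    by_contra hne
    exact absurd heq (ne_of_lt (key 0 hne))

lemma gibbs_F (a x : ℝ) :
    F a * Real.log (F x) + F (-a) * Real.log (F (-x)) ≤
      F a * Real.log (F a) + F (-a) * Real.log (F (-a)) ∧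
    (F a * Real.log (F x) + F (-a) * Real.log (F (-x)) =
      F a * Real.log (F a) + F (-a) * Real.log (F (-a)) → x = a) := by
  rw [F_neg a, F_neg x]
  obtain ⟨h1, h2⟩ := gibbs (F_pos x) (F_lt_one x) (F_pos a) (F_lt_one a)
  exact ⟨h1, fun h => F_inj (h2 h)⟩

theorem BT_MLE_recovers_true_parameters (n : ℕ)
    (I : Finset (Fin (n + 1) × Fin (n + 1)))
    (hconn : (SimpleGraph.fromRel (fun i j => (i, j) ∈ I)).Connected)
    (m0 : Fin (n + 1) → ℝ) (hm0 : m0 0 = 0)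
    (L : (Fin (n + 1) → ℝ) → ℝ)
    (hL : ∀ m, L m = ∑ p ∈ I,
      (F (m0 p.2 - m0 p.1) * Real.log (F (m p.2 - m p.1)) +
       F (m0 p.1 - m0 p.2) * Real.log (F (m p.1 - m p.2)))) :
    ∀ m : Fin (n + 1) → ℝ, m 0 = 0 →
      L m ≤ L m0 ∧ (L m = L m0 → m = m0) := by
  intro m hm
  have term_le : ∀ p ∈ I,
      F (m0 p.2 - m0 p.1) * Real.log (F (m p.2 - m p.1)) +
        F (m0 p.1 - m0 p.2) * Real.log (F (m p.1 - m p.2)) ≤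
      F (m0 p.2 - m0 p.1) * Real.log (F (m0 p.2 - m0 p.1)) +
        F (m0 p.1 - m0 p.2) * Real.log (F (m0 p.1 - m0 p.2)) := by
    intro p _
    have := (gibbs_F (m0 p.2 - m0 p.1) (m p.2 - m p.1)).1
    rw [neg_sub, neg_sub] at this
    exact this
  have hle : L m ≤ L m0 := by
    rw [hL m, hL m0]
    exact Finset.sum_le_sum term_le
  refine ⟨hle, fun heq => ?_⟩
  rw [hL m, hL m0] at heq
  have hterm : ∀ p ∈ I,
      F (m0 p.2 - m0 p.1) * Real.log (F (m p.2 - m p.1)) +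
        F (m0 p.1 - m0 p.2) * Real.log (F (m p.1 - m p.2)) =
      F (m0 p.2 - m0 p.1) * Real.log (F (m0 p.2 - m0 p.1)) +
        F (m0 p.1 - m0 p.2) * Real.log (F (m0 p.1 - m0 p.2)) :=
    (Finset.sum_eq_sum_iff_of_le term_le).mp heq
  have hdiff : ∀ p ∈ I, m p.2 - m p.1 = m0 p.2 - m0 p.1 := by
    intro p hp
    have h := hterm p hp
    have := (gibbs_F (m0 p.2 - m0 p.1) (m p.2 - m p.1)).2
    rw [neg_sub, neg_sub] at this
    exact this h
  -- d is constant on the connected graph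
  set G := SimpleGraph.fromRel (fun i j : Fin (n+1) => (i, j) ∈ I) with hG
  have hadj : ∀ i j : Fin (n+1), G.Adj i j → m i - m0 i = m j - m0 j := by
    intro i j hij
    rw [SimpleGraph.fromRel_adj] at hij
    rcases hij.2 with h | h
    · have := hdiff (i, j) h; simp at this; linarith
    · have := hdiff (j, i) h; simp at this; linarith
  have hwalk : ∀ (i j : Fin (n+1)), G.Walk i j → m i - m0 i = m j - m0 j := by
    intro i j w
    induction w with
    | nil => rfl
    | cons h w ih => rw [hadj _ _ h]; exact ih
  have hconst : ∀ i : Fin (n+1), m i - m0 i = m 0 - m0 0 := fun i =>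
    (hconn.preconnected i 0).elim (hwalk i 0)
  funext i
  have := hconst i
  rw [hm, hm0] at this
  linarith
end
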